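/- If U^τ (V e_u) = V e_v for some integer τ ≥ 1 and indices u, v, then also U^τ (V e_v) = V e_u; consequently U^{2τ} (V e_u) = V e_u and U^{2τ} (V e_v) = V e_v. -/

import Mathlib

open Matrix

theorem stmt_4 (k m n : ℕ) (hk : 0 < k) (hm : 0 < m) (hn : 0 < n)
    (V : Matrix (Fin k) (Fin m) ℂ) (W : Matrix (Fin k) (Fin n) ℂ)
    (hV : Vᴴ * V = 1) (hW : Wᴴ * W = 1)
    (U : Matrix (Fin k) (Fin k) ℂ)
    (hU : U = (2 • (W * Wᴴ) - 1) * (2 • (V * Vᴴ) - 1))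
    (τ : ℕ) (hτ : 1 ≤ τ) (u v : Fin m)
    (hPST : (U ^ τ) *ᵥ (V *ᵥ Pi.single u 1) = V *ᵥ Pi.single v 1) :
    (U ^ τ) *ᵥ (V *ᵥ Pi.single v 1) = V *ᵥ Pi.single u 1 ∧
    (U ^ (2 * τ)) *ᵥ (V *ᵥ Pi.single u 1) = V *ᵥ Pi.single u 1 ∧
    (U ^ (2 * τ)) *ᵥ (V *ᵥ Pi.single v 1) = V *ᵥ Pi.single v 1 := by
  set R : Matrix (Fin k) (Fin k) ℂ := 2 • (V * Vᴴ) - 1 with hRdef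
  set S : Matrix (Fin k) (Fin k) ℂ := 2 • (W * Wᴴ) - 1 with hSdef
  have hPPV : (V * Vᴴ) * (V * Vᴴ) = V * Vᴴ := by
    rw [Matrix.mul_assoc, ← Matrix.mul_assoc Vᴴ, hV, Matrix.one_mul]
  have hPPW : (W * Wᴴ) * (W * Wᴴ) = W * Wᴴ := by
    rw [Matrix.mul_assoc, ← Matrix.mul_assoc Wᴴ, hW, Matrix.one_mul]
  have hRR : R * R = 1 := by
    have h : R * R = 4 • ((V * Vᴴ) * (V * Vᴴ)) - 4 • (V * Vᴴ) + 1 := by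
      rw [hRdef]; noncomm_ring
    rw [h, hPPV, sub_self, zero_add]
  have hSS : S * S = 1 := by
    have h : S * S = 4 • ((W * Wᴴ) * (W * Wᴴ)) - 4 • (W * Wᴴ) + 1 := by
      rw [hSdef]; noncomm_ring
    rw [h, hPPW, sub_self, zero_add]
  have hRV : R * V = V := by
    rw [hRdef, Matrix.sub_mul, Matrix.one_mul, Matrix.smul_mul,
      Matrix.mul_assoc, hV, Matrix.mul_one, two_smul]
    abel
  have hUSR : U = S * R := hU
  have hRUR : R * U * R = R * S := by
    rw [hUSR, ← Matrix.mul_assoc, Matrix.mul_assoc (R * S) R R, hRR,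
      Matrix.mul_one]
  -- R * U^t * R = (R*S)^t
  have key : ∀ t : ℕ, R * U ^ t * R = (R * S) ^ t := by
    intro t
    induction t with
    | zero => simpa using hRR
    | succ t ih =>
      have h1 : (R * U ^ t * R) * (R * U * R) = R * U ^ (t + 1) * R := by
        rw [pow_succ]
        rw [Matrix.mul_assoc (R * U ^ t) R (R * U * R),
          ← Matrix.mul_assoc R (R * U) R, ← Matrix.mul_assoc R R U, hRR,
          Matrix.one_mul, ← Matrix.mul_assoc, Matrix.mul_assoc R (U ^ t) U]
      rw [← h1, ih, hRUR, ← pow_succ]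
  -- (R*S)^t * U^t = 1
  have hinv : ∀ t : ℕ, (R * S) ^ t * U ^ t = 1 := by
    intro t
    induction t with
    | zero => simp
    | succ t ih =>
      rw [pow_succ', pow_succ, hUSR]
      calc (R * S) * (R * S) ^ t * ((S * R) ^ t * (S * R))
          = (R * S) * ((R * S) ^ t * (S * R) ^ t) * (S * R) := by
            simp [Matrix.mul_assoc]
        _ = (R * S) * (S * R) := by rw [← hUSR, ih, Matrix.mul_one]
        _ = 1 := by
            rw [Matrix.mul_assoc, ← Matrix.mul_assoc S S R, hSS,
              Matrix.one_mul, hRR]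
  have hRVvec : ∀ x : Fin m → ℂ, R *ᵥ (V *ᵥ x) = V *ᵥ x := by
    intro x; rw [Matrix.mulVec_mulVec, hRV]
  -- main step
  have h1 : V *ᵥ Pi.single u 1 = R *ᵥ (U ^ τ *ᵥ (V *ᵥ Pi.single v 1)) := by
    have h2 : (R * S) ^ τ *ᵥ ((U ^ τ) *ᵥ (V *ᵥ Pi.single u 1))
        = (R * S) ^ τ *ᵥ (V *ᵥ Pi.single v 1) := by rw [hPST]
    rw [Matrix.mulVec_mulVec, hinv τ, Matrix.one_mulVec] at h2
    rw [h2, ← key τ]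
    rw [← Matrix.mulVec_mulVec, ← Matrix.mulVec_mulVec, hRVvec]
  have hmain : (U ^ τ) *ᵥ (V *ᵥ Pi.single v 1) = V *ᵥ Pi.single u 1 := by
    have h3 := congrArg (fun y => R *ᵥ y) h1
    rw [hRVvec, Matrix.mulVec_mulVec, hRR, Matrix.one_mulVec] at h3
    exact h3.symm
  refine ⟨hmain, ?_, ?_⟩
  · rw [two_mul, pow_add, ← Matrix.mulVec_mulVec, hPST, hmain]
  · rw [two_mul, pow_add, ← Matrix.mulVec_mulVec, hmain, hPST]
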